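/- Suppose there exist ρ > 0 and a measurable map v: ℝ^d → {w ∈ ℝ^d : ‖w‖₂ ≤ 1} such that y_i ∫ σ′(θᵀx_i)·x_iᵀv(θ) dμ₀(θ) ≥ ρ for every i ∈ {1, …, n}. Then for every vector ξ ∈ ℝ^n of the form ξ = (α_i y_i)_{i=1}^n with all α_i ≥ 0, one has ξᵀ H^∞ ξ = Σ_{i,j=1}^n ξ_i k_NTK(x_i, x_j) ξ_j ≥ ρ²‖ξ‖₂². -/

import Mathlib

open MeasureTheory Real Finset
open scoped RealInnerProductSpace BigOperators

noncomputable section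

/-- Two-layer network `f_Θ(x) = m^{-β} ∑_r a_r σ(θ_rᵀ x)`. -/
def fnet (d m : ℕ) (β : ℝ) (σ : ℝ → ℝ) (a : Fin m → ℝ)
    (Θ : Fin m → EuclideanSpace ℝ (Fin d)) (x : EuclideanSpace ℝ (Fin d)) : ℝ :=
  (m : ℝ) ^ (-β) * ∑ r, a r * σ ⟪Θ r, x⟫

/-- Functional-gradient value `g_Θ(x_i) = -y_i/(1+exp(y_i f_Θ(x_i)))`. -/
def gval (d m n : ℕ) (β : ℝ) (σ : ℝ → ℝ) (a : Fin m → ℝ)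
    (x : Fin n → EuclideanSpace ℝ (Fin d)) (y : Fin n → ℝ)
    (Θ : Fin m → EuclideanSpace ℝ (Fin d)) (i : Fin n) : ℝ :=
  - y i / (1 + Real.exp (y i * fnet d m β σ a Θ (x i)))

/-- Empirical logistic loss `L(Θ)`. -/
def eloss (d m n : ℕ) (β : ℝ) (σ : ℝ → ℝ) (a : Fin m → ℝ)
    (x : Fin n → EuclideanSpace ℝ (Fin d)) (y : Fin n → ℝ)
    (Θ : Fin m → EuclideanSpace ℝ (Fin d)) : ℝ :=
  (1 / n : ℝ) * ∑ i, Real.log (1 + Real.exp (- y i * fnet d m β σ a Θ (x i)))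

/-- `L¹(ν_n)`-norm of the functional gradient. -/
def L1norm (d m n : ℕ) (β : ℝ) (σ : ℝ → ℝ) (a : Fin m → ℝ)
    (x : Fin n → EuclideanSpace ℝ (Fin d)) (y : Fin n → ℝ)
    (Θ : Fin m → EuclideanSpace ℝ (Fin d)) : ℝ :=
  (1 / n : ℝ) * ∑ i, |gval d m n β σ a x y Θ i|

/-- Parameter gradient `∇_Θ L(Θ)`. -/
def gradL (d m n : ℕ) (β : ℝ) (σ : ℝ → ℝ) (a : Fin m → ℝ)
    (x : Fin n → EuclideanSpace ℝ (Fin d)) (y : Fin n → ℝ)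
    (Θ : Fin m → EuclideanSpace ℝ (Fin d)) : Fin m → EuclideanSpace ℝ (Fin d) :=
  fun r => (1 / n : ℝ) • ∑ i,
    (gval d m n β σ a x y Θ i * (a r * (m : ℝ) ^ (-β) * deriv σ ⟪Θ r, x i⟫)) • x i

/-- Squared Euclidean norm of a parameter block `‖Θ‖₂²`. -/
def nsq (d m : ℕ) (Θ : Fin m → EuclideanSpace ℝ (Fin d)) : ℝ := ∑ r, ‖Θ r‖ ^ 2

/-- Euclidean norm of a parameter block `‖Θ‖₂`. -/
def en2 (d m : ℕ) (Θ : Fin m → EuclideanSpace ℝ (Fin d)) : ℝ := Real.sqrt (nsq d m Θ)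

/-- The `(2,1)`-norm `‖Θ‖_{2,1} = ∑_r ‖θ_r‖₂`. -/
def n21 (d m : ℕ) (Θ : Fin m → EuclideanSpace ℝ (Fin d)) : ℝ := ∑ r, ‖Θ r‖

/-- Gradient-descent iterates `Θ^{(t+1)} = Θ^{(t)} - η ∇_Θ L(Θ^{(t)})`. -/
def gdSeq (d m n : ℕ) (β : ℝ) (σ : ℝ → ℝ) (a : Fin m → ℝ)
    (x : Fin n → EuclideanSpace ℝ (Fin d)) (y : Fin n → ℝ) (η : ℝ)
    (Θ0 : Fin m → EuclideanSpace ℝ (Fin d)) : ℕ → Fin m → EuclideanSpace ℝ (Fin d)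
  | 0 => Θ0
  | t + 1 => fun r => gdSeq d m n β σ a x y η Θ0 t r
      - η • gradL d m n β σ a x y (gdSeq d m n β σ a x y η Θ0 t) r

/-- Kernel-smoothing quantity `Q(Θ) = ‖(1/n) ∑_i g_Θ(x_i) ∇_Θ f_Θ(x_i)‖₂²`. -/
def Qker (d m n : ℕ) (β : ℝ) (σ : ℝ → ℝ) (a : Fin m → ℝ)
    (x : Fin n → EuclideanSpace ℝ (Fin d)) (y : Fin n → ℝ)
    (Θ : Fin m → EuclideanSpace ℝ (Fin d)) : ℝ :=
  nsq d m (fun r => (1 / n : ℝ) • ∑ i,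
    (gval d m n β σ a x y Θ i * (a r * (m : ℝ) ^ (-β) * deriv σ ⟪Θ r, x i⟫)) • x i)

/-- Symmetric signs: `a_r = 1` for `r < k`, `a_r = -1` for `r ≥ k` (with `m = 2k`). -/
def symSigns (k : ℕ) : Fin (2 * k) → ℝ := fun r => if (r : ℕ) < k then 1 else -1

/-- Symmetric initialization: `θ^{(0)}_{r+k} = θ^{(0)}_r` (with `m = 2k`). -/
def symInit (d k : ℕ) (ω : Fin k → EuclideanSpace ℝ (Fin d)) :
    Fin (2 * k) → EuclideanSpace ℝ (Fin d) :=
  fun r => if h : (r : ℕ) < k then ω ⟨r, h⟩ else ω ⟨(r : ℕ) - k, by have := r.isLt; omega⟩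

/-- Ramp loss with margin `γ`. -/
def ramp (γ v : ℝ) : ℝ := if v < 0 then 1 else if v ≤ γ then 1 - v / γ else 0

/-- Empirical Rademacher complexity of the ramp-loss class over the ball of radius `D`
around `Θ0`. -/
def rade (d m n : ℕ) (β γ D : ℝ) (σ : ℝ → ℝ) (a : Fin m → ℝ)
    (x : Fin n → EuclideanSpace ℝ (Fin d)) (y : Fin n → ℝ)
    (Θ0 : Fin m → EuclideanSpace ℝ (Fin d)) : ℝ :=
  (1 / n : ℝ) * (1 / 2 ^ n : ℝ) * ∑ ε : Fin n → Bool,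
    sSup {z : ℝ | ∃ Θ : Fin m → EuclideanSpace ℝ (Fin d),
      en2 d m (fun r => Θ r - Θ0 r) ≤ D ∧
      z = ∑ i, (if ε i then (1 : ℝ) else -1) * ramp γ (y i * fnet d m β σ a Θ (x i))}

/-- Neural tangent kernel. -/
def kNTK (d : ℕ) (σ : ℝ → ℝ) (μ₀ : Measure (EuclideanSpace ℝ (Fin d)))
    (x x' : EuclideanSpace ℝ (Fin d)) : ℝ :=
  ∫ θ, deriv σ ⟪θ, x⟫ * deriv σ ⟪θ, x'⟫ * ⟪x, x'⟫ ∂μ₀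

lemma sq_integral_le_integral_sq' {Ω : Type*} [MeasurableSpace Ω] {μ : Measure Ω}
    [IsProbabilityMeasure μ] {g : Ω → ℝ} (hm : AEStronglyMeasurable g μ) (C : ℝ)
    (hb : ∀ θ, |g θ| ≤ C) : (∫ θ, g θ ∂μ) ^ 2 ≤ ∫ θ, g θ ^ 2 ∂μ := by
  have hℒ : MemLp g 2 μ :=
    MemLp.of_bound hm C (ae_of_all _ fun θ => by simpa [Real.norm_eq_abs] using hb θ)
  have h := ProbabilityTheory.variance_nonneg g μ
  rw [ProbabilityTheory.variance_eq_sub hℒ] at h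
  have h2 : (∫ θ, (g ^ 2) θ ∂μ) = ∫ θ, g θ ^ 2 ∂μ := by simp [Pi.pow_apply]
  rw [h2] at h
  linarith

/-- Proposition 1-(ii): separability implies positivity of the NTK Gram
matrix on the cone spanned by the labels. -/
theorem separability_implies_ntk_positivity_on_cone
    (d n : ℕ) (hn : 0 < n)
    (σ : ℝ → ℝ) (K₁ : ℝ) (hσ : Differentiable ℝ σ)
    (hK₁ : ∀ z, |deriv σ z| ≤ K₁)
    (x : Fin n → EuclideanSpace ℝ (Fin d)) (y : Fin n → ℝ)
    (hx : ∀ i, ‖x i‖ ≤ 1) (hy : ∀ i, y i = 1 ∨ y i = -1)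
    (μ₀ : Measure (EuclideanSpace ℝ (Fin d))) [IsProbabilityMeasure μ₀]
    (ρ : ℝ) (hρ : 0 < ρ)
    (v : EuclideanSpace ℝ (Fin d) → EuclideanSpace ℝ (Fin d))
    (hv_meas : Measurable v) (hv_norm : ∀ θ, ‖v θ‖ ≤ 1)
    (hsep : ∀ i, ρ ≤ y i * ∫ θ, deriv σ ⟪θ, x i⟫ * ⟪x i, v θ⟫ ∂μ₀)
    (α : Fin n → ℝ) (hα : ∀ i, 0 ≤ α i) :
    ρ ^ 2 * ∑ i, (α i * y i) ^ 2 ≤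
      ∑ i, ∑ j, (α i * y i) * kNTK d σ μ₀ (x i) (x j) * (α j * y j) := by
  classical
  set ξ : Fin n → ℝ := fun i => α i * y i with hξ
  set c : EuclideanSpace ℝ (Fin d) → Fin n → ℝ :=
    fun θ i => ξ i * deriv σ ⟪θ, x i⟫ with hc
  set F : EuclideanSpace ℝ (Fin d) → EuclideanSpace ℝ (Fin d) :=
    fun θ => ∑ i, c θ i • x i with hF
  have hK0 : 0 ≤ K₁ := le_trans (abs_nonneg _) (hK₁ 0)
  have hmσ : Measurable (deriv σ) := measurable_deriv σ
  have hmi : ∀ i : Fin n, Measurable fun θ : EuclideanSpace ℝ (Fin d) => deriv σ ⟪θ, x i⟫ :=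
    fun i => hmσ.comp (continuous_id.inner continuous_const).measurable
  have hint : ∀ (g : EuclideanSpace ℝ (Fin d) → ℝ), Measurable g → ∀ C : ℝ,
      (∀ θ, |g θ| ≤ C) → Integrable g μ₀ := fun g hg C hC =>
    (integrable_const C).mono' hg.aestronglyMeasurable
      (ae_of_all _ fun θ => by simpa [Real.norm_eq_abs] using hC θ)
  have hxx : ∀ i j : Fin n, |⟪x i, x j⟫| ≤ 1 := fun i j =>
    (abs_real_inner_le_norm _ _).trans (mul_le_one₀ (hx i) (norm_nonneg _) (hx j))
  have hxv : ∀ (i : Fin n) θ, |⟪x i, v θ⟫| ≤ 1 := fun i θ =>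
    (abs_real_inner_le_norm _ _).trans (mul_le_one₀ (hx i) (norm_nonneg _) (hv_norm θ))
  -- integrability of kernel integrands
  have hIntij : ∀ i j : Fin n,
      Integrable (fun θ => deriv σ ⟪θ, x i⟫ * deriv σ ⟪θ, x j⟫ * ⟪x i, x j⟫) μ₀ := by
    intro i j
    refine hint _ (((hmi i).mul (hmi j)).mul measurable_const) (K₁ * K₁ * 1) fun θ => ?_
    rw [abs_mul, abs_mul]
    exact mul_le_mul (mul_le_mul (hK₁ _) (hK₁ _) (abs_nonneg _) hK0) (hxx i j)
      (abs_nonneg _) (by positivity)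
  have hIntvi : ∀ i : Fin n,
      Integrable (fun θ => deriv σ ⟪θ, x i⟫ * ⟪x i, v θ⟫) μ₀ := by
    intro i
    refine hint _ ((hmi i).mul (measurable_const.inner hv_meas)) (K₁ * 1) fun θ => ?_
    rw [abs_mul]
    exact mul_le_mul (hK₁ _) (hxv i θ) (abs_nonneg _) hK0
  -- Step 1: the RHS equals ∫ ‖F θ‖²
  have hpt : ∀ θ, ∑ i, ∑ j,
      ξ i * (deriv σ ⟪θ, x i⟫ * deriv σ ⟪θ, x j⟫ * ⟪x i, x j⟫) * ξ j = ‖F θ‖ ^ 2 := by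
    intro θ
    rw [← real_inner_self_eq_norm_sq]
    simp only [hF, sum_inner, inner_sum, real_inner_smul_left, real_inner_smul_right, hc]
    refine Finset.sum_congr rfl fun i _ => Finset.sum_congr rfl fun j _ => ?_
    rw [real_inner_comm (x j) (x i)]; ring
  have hRHS : ∑ i, ∑ j, ξ i * kNTK d σ μ₀ (x i) (x j) * ξ j = ∫ θ, ‖F θ‖ ^ 2 ∂μ₀ := by
    have h1 : ∀ i j : Fin n, ξ i * kNTK d σ μ₀ (x i) (x j) * ξ j
        = ∫ θ, ξ i * (deriv σ ⟪θ, x i⟫ * deriv σ ⟪θ, x j⟫ * ⟪x i, x j⟫) * ξ j ∂μ₀ := by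
      intro i j
      rw [kNTK, ← integral_const_mul, ← integral_mul_const]
    calc ∑ i, ∑ j, ξ i * kNTK d σ μ₀ (x i) (x j) * ξ j
        = ∑ i, ∫ θ, ∑ j, ξ i * (deriv σ ⟪θ, x i⟫ * deriv σ ⟪θ, x j⟫ * ⟪x i, x j⟫) * ξ j ∂μ₀ := by
          refine Finset.sum_congr rfl fun i _ => ?_
          rw [integral_finset_sum _ fun j _ => ((hIntij i j).const_mul _).mul_const _]
          exact Finset.sum_congr rfl fun j _ => h1 i j
      _ = ∫ θ, ∑ i, ∑ j, ξ i * (deriv σ ⟪θ, x i⟫ * deriv σ ⟪θ, x j⟫ * ⟪x i, x j⟫) * ξ j ∂μ₀ := by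
          rw [integral_finset_sum _ fun i _ =>
            integrable_finset_sum _ fun j _ => ((hIntij i j).const_mul _).mul_const _]
      _ = ∫ θ, ‖F θ‖ ^ 2 ∂μ₀ := integral_congr_ae (ae_of_all _ hpt)
  -- Step 2: ρ ∑ α ≤ ∫ ⟪F θ, v θ⟫
  have hFv : ∀ θ, ⟪F θ, v θ⟫ = ∑ i, ξ i * (deriv σ ⟪θ, x i⟫ * ⟪x i, v θ⟫) := by
    intro θ
    simp only [hF, sum_inner, real_inner_smul_left, hc]
    exact Finset.sum_congr rfl fun i _ => by ring
  have hIntFv : Integrable (fun θ => ⟪F θ, v θ⟫) μ₀ := by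
    rw [show (fun θ => ⟪F θ, v θ⟫)
        = fun θ => ∑ i, ξ i * (deriv σ ⟪θ, x i⟫ * ⟪x i, v θ⟫) from funext hFv]
    exact integrable_finset_sum _ fun i _ => (hIntvi i).const_mul _
  have hstep2 : ρ * ∑ i, α i ≤ ∫ θ, ⟪F θ, v θ⟫ ∂μ₀ := by
    have hswap : ∫ θ, ⟪F θ, v θ⟫ ∂μ₀
        = ∑ i, ξ i * ∫ θ, deriv σ ⟪θ, x i⟫ * ⟪x i, v θ⟫ ∂μ₀ := by
      rw [integral_congr_ae (ae_of_all _ hFv),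
        integral_finset_sum _ fun i _ => (hIntvi i).const_mul _]
      exact Finset.sum_congr rfl fun i _ => integral_const_mul _ _
    rw [hswap, Finset.mul_sum]
    refine Finset.sum_le_sum fun i _ => ?_
    have h := hsep i
    calc ρ * α i = α i * ρ := mul_comm _ _
      _ ≤ α i * (y i * ∫ θ, deriv σ ⟪θ, x i⟫ * ⟪x i, v θ⟫ ∂μ₀) :=
          mul_le_mul_of_nonneg_left h (hα i)
      _ = ξ i * ∫ θ, deriv σ ⟪θ, x i⟫ * ⟪x i, v θ⟫ ∂μ₀ := by rw [hξ]; ring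
  -- bound and measurability of ‖F‖
  set C : ℝ := ∑ i, |ξ i| * K₁ with hC
  have hFnorm : ∀ θ, ‖F θ‖ ≤ C := by
    intro θ
    refine (norm_sum_le _ _).trans ?_
    refine Finset.sum_le_sum fun i _ => ?_
    rw [norm_smul, Real.norm_eq_abs, hc, abs_mul]
    calc |ξ i| * |deriv σ ⟪θ, x i⟫| * ‖x i‖ ≤ |ξ i| * K₁ * 1 :=
        mul_le_mul (mul_le_mul_of_nonneg_left (hK₁ _) (abs_nonneg _)) (hx i)
          (norm_nonneg _) (by positivity)
      _ = |ξ i| * K₁ := mul_one _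
  have hC0 : 0 ≤ C := le_trans (norm_nonneg (F 0)) (hFnorm 0)
  have hmF : Measurable F := by
    refine Finset.measurable_sum _ fun i _ => ?_
    exact (((measurable_const.mul (hmi i)) : Measurable fun θ => c θ i).smul_const (x i))
  have hIntFn : Integrable (fun θ => ‖F θ‖) μ₀ :=
    hint _ hmF.norm C fun θ => by simpa [abs_of_nonneg (norm_nonneg _)] using hFnorm θ
  -- Step 3: (∫⟪F,v⟫)² ≤ ∫‖F‖²
  have hmono : ∫ θ, ⟪F θ, v θ⟫ ∂μ₀ ≤ ∫ θ, ‖F θ‖ ∂μ₀ := by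
    refine integral_mono hIntFv hIntFn fun θ => ?_
    calc ⟪F θ, v θ⟫ ≤ ‖F θ‖ * ‖v θ‖ := real_inner_le_norm _ _
      _ ≤ ‖F θ‖ * 1 := mul_le_mul_of_nonneg_left (hv_norm θ) (norm_nonneg _)
      _ = ‖F θ‖ := mul_one _
  have hsq : (∫ θ, ‖F θ‖ ∂μ₀) ^ 2 ≤ ∫ θ, ‖F θ‖ ^ 2 ∂μ₀ :=
    sq_integral_le_integral_sq' hmF.norm.aestronglyMeasurable C
      (fun θ => by simpa [abs_of_nonneg (norm_nonneg _)] using hFnorm θ)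
  -- assemble
  have hαsum : 0 ≤ ∑ i, α i := Finset.sum_nonneg fun i _ => hα i
  have hρα : 0 ≤ ρ * ∑ i, α i := mul_nonneg hρ.le hαsum
  have hξsq : ∑ i, ξ i ^ 2 = ∑ i, α i ^ 2 :=
    Finset.sum_congr rfl fun i _ => by
      show (α i * y i) ^ 2 = α i ^ 2
      rcases hy i with h | h <;> rw [h] <;> ring
  have hkey : ρ ^ 2 * ∑ i, ξ i ^ 2 ≤ (ρ * ∑ i, α i) ^ 2 := by
    rw [hξsq, mul_pow]
    exact mul_le_mul_of_nonneg_left (Finset.sum_sq_le_sq_sum_of_nonneg fun i _ => hα i)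
      (by positivity)
  have hIntnn : 0 ≤ ∫ θ, ⟪F θ, v θ⟫ ∂μ₀ := le_trans hρα hstep2
  calc ρ ^ 2 * ∑ i, ξ i ^ 2 ≤ (ρ * ∑ i, α i) ^ 2 := hkey
    _ ≤ (∫ θ, ⟪F θ, v θ⟫ ∂μ₀) ^ 2 := pow_le_pow_left₀ hρα hstep2 2
    _ ≤ (∫ θ, ‖F θ‖ ∂μ₀) ^ 2 := pow_le_pow_left₀ hIntnn hmono 2
    _ ≤ ∫ θ, ‖F θ‖ ^ 2 ∂μ₀ := hsq
    _ = ∑ i, ∑ j, ξ i * kNTK d σ μ₀ (x i) (x j) * ξ j := hRHS.symm
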